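/- Let X be a compact metric space, f : X → X a transitive homeomorphism, and x, y ∈ X points such that the forward orbit of x and the backward orbit of y are dense and O(x) ∩ O(y) = ∅. Fix z with dense forward and backward orbits and O(z) disjoint from O(x) ∪ O(y), and h, k ∈ ℕ₀. Then for every n there exist natural numbers k_n, h_n (strictly increasing in n) with d(f^{h+1}(x), f^{-k_n}(z)) < 1/n and d(f^{h_n+1}(z), f^{-k}(y)) < 1/n, and the resulting sequences of chains x, f(x), …, f^h(x), f^{-k_n}(z), …, z, …, f^{h_n}(z), f^{-k}(y), …, y are acyclic 1/n-chains from x to y with nested supports whose union (minus {x,y}) is {f(x),…,f^h(x)} ∪ O(z) ∪ {f^{-k}(y),…,f^{-1}(y)}. -/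

import Mathlib

/-- `C 0, C 1, …, C m` is an ε-chain for `f` from `x` to `y`. -/
def IsEpsChain {X : Type*} [MetricSpace X] (f : X → X) (ε : ℝ) (C : ℕ → X) (m : ℕ)
    (x y : X) : Prop :=
  1 ≤ m ∧ C 0 = x ∧ C m = y ∧ ∀ i < m, dist (f (C i)) (C (i + 1)) < ε

/-- The chain `C 0, …, C m` contains a cyclic sub-chain. -/
def HasCyclicSubchain {X : Type*} (C : ℕ → X) (m : ℕ) : Prop :=
  (∃ i j, 1 ≤ i ∧ i < m ∧ 1 ≤ j ∧ j < m ∧ i ≠ j ∧ C i = C j) ∨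
  (∃ i, 1 ≤ i ∧ i < m ∧ (C i = C 0 ∨ C i = C m))

/-- The support (set of points) of the chain `C 0, …, C m`. -/
def chainSupport {X : Type*} (C : ℕ → X) (m : ℕ) : Set X := {p | ∃ i ≤ m, C i = p}

/-- The two-sided orbit `O(x) = {f^k(x) : k ∈ ℤ}`. -/
def orbitZ {X : Type*} (F : Equiv.Perm X) (x : X) : Set X := {y | ∃ k : ℤ, (F ^ k) x = y}

section Aux
variable {X : Type*} [MetricSpace X]

private lemma aux_neBot (no_iso : ∀ p : X, ¬ IsOpen ({p} : Set X)) (p : X) :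
    (nhdsWithin p {p}ᶜ).NeBot := by
  rw [Filter.neBot_iff]
  intro hbot
  exact no_iso p ((isOpen_singleton_iff_punctured_nhds p).2 hbot)

private lemma aux_aperiodic (no_iso : ∀ p : X, ¬ IsOpen ({p} : Set X))
    (g : Equiv.Perm X) (w : X) (hw : Dense (orbitZ g w)) :
    ∀ a b : ℤ, (g ^ a) w = (g ^ b) w → a = b := by
  intro a b hab
  by_contra hne
  have hfix : (g ^ (a - b)) w = w := by
    have h1 : (g ^ (a - b)) ((g ^ b) w) = (g ^ b) w := by
      rw [← Equiv.Perm.mul_apply, ← zpow_add, sub_add_cancel, hab]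
    have h2 : (g ^ (a - b)) ((g ^ b) w) = (g ^ b) ((g ^ (a - b)) w) := by
      rw [← Equiv.Perm.mul_apply, ← Equiv.Perm.mul_apply, ← zpow_add, ← zpow_add, add_comm]
    rw [h2] at h1
    exact (g ^ b).injective h1
  set P : ℤ := |a - b| with hPdef
  have hP : 0 < P := abs_pos.mpr (sub_ne_zero.mpr hne)
  have hfixP : (g ^ P) w = w := by
    rcases abs_cases (a - b) with ⟨h1, _⟩ | ⟨h1, _⟩
    · rwa [hPdef, h1]
    · rw [hPdef, h1, zpow_neg]
      exact (g ^ (a - b)).injective (by rw [← Equiv.Perm.mul_apply, mul_inv_cancel, Equiv.Perm.one_apply, hfix])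
  have hmem : ∀ c : ℤ, (g ^ c) w = (g ^ (c % P)) w := by
    intro c
    have h1 : (g ^ (c % P + P * (c / P))) w = (g ^ (c % P)) w := by
      rw [zpow_add, Equiv.Perm.mul_apply, zpow_mul,
        Equiv.Perm.zpow_apply_eq_self_of_apply_eq_self hfixP]
    rwa [Int.emod_add_mul_ediv c P] at h1
  have hsub : orbitZ g w ⊆ (fun r : ℤ => (g ^ r) w) '' (Set.Ico 0 P) := by
    rintro _ ⟨c, rfl⟩
    exact ⟨c % P, ⟨Int.emod_nonneg c hP.ne', Int.emod_lt_of_pos c hP⟩, (hmem c).symm⟩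
  have hfin : ((fun r : ℤ => (g ^ r) w) '' (Set.Ico 0 P)).Finite :=
    (Set.finite_Ico _ _).image _
  have hdense : Dense ((fun r : ℤ => (g ^ r) w) '' (Set.Ico 0 P)) := hw.mono hsub
  have : Finite X := by
    have h1 : (fun r : ℤ => (g ^ r) w) '' (Set.Ico 0 P) = Set.univ := by
      rw [← hfin.isClosed.closure_eq, hdense.closure_eq]
    exact Set.finite_univ_iff.mp (h1 ▸ hfin)
  exact no_iso w (isOpen_discrete _)

private lemma aux_exists_gt (no_iso : ∀ p : X, ¬ IsOpen ({p} : Set X))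
    (u : ℕ → X) (hd : Dense (Set.range u)) (t : X) {ε : ℝ} (hε : 0 < ε) (N : ℕ) :
    ∃ i, N < i ∧ dist (u i) t < ε := by
  haveI : ∀ p : X, (nhdsWithin p {p}ᶜ).NeBot := aux_neBot no_iso
  have hfin : (u '' (Set.Iic N)).Finite := (Set.finite_Iic N).image u
  have hd2 : Dense (Set.range u \ u '' (Set.Iic N)) := hd.diff_finite hfin
  obtain ⟨q, hq1, hq2⟩ := hd2.inter_open_nonempty (Metric.ball t ε) Metric.isOpen_ball
    ⟨t, Metric.mem_ball_self hε⟩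
  obtain ⟨⟨i, rfl⟩, hnot⟩ := hq2
  refine ⟨i, ?_, Metric.mem_ball.mp hq1⟩
  by_contra hle
  exact hnot ⟨i, Set.mem_Iic.mpr (by omega), rfl⟩

end Aux

/-- Realization of the order type `h + ζ + k` by nested acyclic `1/n`-chains
`x, f(x), …, f^h(x), f^{-k_n}(z), …, z, …, f^{h_n}(z), f^{-k}(y), …, f^{-1}(y), y`. -/
theorem stmt19 {X : Type*} [MetricSpace X] [CompactSpace X]
    (f : X ≃ₜ X)
    (htrans : ∃ p : X, Dense (orbitZ f.toEquiv p))
    (x y z : X)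
    (hxf : Dense {p | ∃ i : ℕ, (f.toEquiv ^ (i : ℤ)) x = p})
    (hyb : Dense {p | ∃ i : ℕ, 1 ≤ i ∧ (f.toEquiv ^ (-(i : ℤ))) y = p})
    (hxy : orbitZ f.toEquiv x ∩ orbitZ f.toEquiv y = ∅)
    (hzf : Dense {p | ∃ i : ℕ, (f.toEquiv ^ (i : ℤ)) z = p})
    (hzb : Dense {p | ∃ i : ℕ, 1 ≤ i ∧ (f.toEquiv ^ (-(i : ℤ))) z = p})
    (hz : orbitZ f.toEquiv z ∩ (orbitZ f.toEquiv x ∪ orbitZ f.toEquiv y) = ∅)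
    (h k : ℕ) :
    ∃ (kseq hseq : ℕ → ℕ) (C : ℕ → ℕ → X) (m : ℕ → ℕ),
      StrictMono kseq ∧ StrictMono hseq ∧
      (∀ n : ℕ, 1 ≤ n →
        dist ((f.toEquiv ^ ((h : ℤ) + 1)) x) ((f.toEquiv ^ (-(kseq n : ℤ))) z)
          < 1 / (n : ℝ) ∧
        dist ((f.toEquiv ^ ((hseq n : ℤ) + 1)) z) ((f.toEquiv ^ (-(k : ℤ))) y)
          < 1 / (n : ℝ)) ∧
      (∀ n, m n = h + kseq n + hseq n + k + 2) ∧
      (∀ n i, C n i =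
        if i ≤ h then (f.toEquiv ^ (i : ℤ)) x
        else if i ≤ h + 1 + kseq n + hseq n then
          (f.toEquiv ^ ((i : ℤ) - (h : ℤ) - 1 - (kseq n : ℤ))) z
        else (f.toEquiv ^ ((i : ℤ) - (m n : ℤ))) y) ∧
      (∀ n : ℕ, 1 ≤ n → IsEpsChain (⇑f) (1 / (n : ℝ)) (C n) (m n) x y) ∧
      (∀ n, ¬ HasCyclicSubchain (C n) (m n)) ∧
      (∀ n, chainSupport (C n) (m n) ⊆ chainSupport (C (n + 1)) (m (n + 1))) ∧
      ((⋃ n, chainSupport (C n) (m n)) \ {x, y} =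
        {p | ∃ i : ℕ, 1 ≤ i ∧ i ≤ h ∧ (f.toEquiv ^ (i : ℤ)) x = p} ∪
        orbitZ f.toEquiv z ∪
        {p | ∃ j : ℕ, 1 ≤ j ∧ j ≤ k ∧ (f.toEquiv ^ (-(j : ℤ))) y = p}) := by
  set g := f.toEquiv with hg
  -- no isolated points
  have no_iso : ∀ p : X, ¬ IsOpen ({p} : Set X) := by
    intro p hp
    obtain ⟨q, hq1, i, hq2⟩ := hxf.inter_open_nonempty {p} hp ⟨p, rfl⟩
    obtain ⟨q', hq'1, j, hj1, hq'2⟩ := hyb.inter_open_nonempty {p} hp ⟨p, rfl⟩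
    rw [Set.mem_singleton_iff] at hq1 hq'1
    rw [hq1] at hq2
    rw [hq'1] at hq'2
    have hmem : p ∈ orbitZ g x ∩ orbitZ g y := ⟨⟨(i : ℤ), hq2⟩, ⟨-(j : ℤ), hq'2⟩⟩
    rw [hxy] at hmem
    exact hmem
  have gz0 : ∀ w : X, (g ^ (0 : ℤ)) w = w := fun w => by simp
  -- aperiodicity
  have hdx : Dense (orbitZ g x) := Dense.mono (by rintro p ⟨i, hi⟩; exact ⟨(i : ℤ), hi⟩) hxf
  have hdy : Dense (orbitZ g y) :=
    Dense.mono (by rintro p ⟨i, _, hi⟩; exact ⟨-(i : ℤ), hi⟩) hyb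
  have hdz : Dense (orbitZ g z) := Dense.mono (by rintro p ⟨i, hi⟩; exact ⟨(i : ℤ), hi⟩) hzf
  have apx := aux_aperiodic no_iso g x hdx
  have apy := aux_aperiodic no_iso g y hdy
  have apz := aux_aperiodic no_iso g z hdz
  -- disjointness
  have dxy : ∀ a b : ℤ, (g ^ a) x ≠ (g ^ b) y := by
    intro a b hab
    have hmem : (g ^ a) x ∈ orbitZ g x ∩ orbitZ g y := ⟨⟨a, rfl⟩, ⟨b, hab.symm⟩⟩
    rw [hxy] at hmem; exact hmem
  have dzx : ∀ a b : ℤ, (g ^ a) z ≠ (g ^ b) x := by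
    intro a b hab
    have hmem : (g ^ a) z ∈ orbitZ g z ∩ (orbitZ g x ∪ orbitZ g y) :=
      ⟨⟨a, rfl⟩, Or.inl ⟨b, hab.symm⟩⟩
    rw [hz] at hmem; exact hmem
  have dzy : ∀ a b : ℤ, (g ^ a) z ≠ (g ^ b) y := by
    intro a b hab
    have hmem : (g ^ a) z ∈ orbitZ g z ∩ (orbitZ g x ∪ orbitZ g y) :=
      ⟨⟨a, rfl⟩, Or.inr ⟨b, hab.symm⟩⟩
    rw [hz] at hmem; exact hmem
  have hpos : ∀ n : ℕ, 1 ≤ n → (0 : ℝ) < 1 / (n : ℝ) := by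
    intro n hn
    have : (0 : ℝ) < (n : ℝ) := by exact_mod_cast hn
    positivity
  -- the choice step
  have key : ∀ (K₀ H₀ n : ℕ), 1 ≤ n → ∃ q : ℕ × ℕ, K₀ < q.1 ∧ H₀ < q.2 ∧
      dist ((g ^ ((h : ℤ) + 1)) x) ((g ^ (-(q.1 : ℤ))) z) < 1 / (n : ℝ) ∧
      dist ((g ^ ((q.2 : ℤ) + 1)) z) ((g ^ (-(k : ℤ))) y) < 1 / (n : ℝ) := by
    intro K₀ H₀ n hn
    have hdzb : Dense (Set.range (fun i : ℕ => (g ^ (-(i : ℤ))) z)) := by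
      refine Dense.mono ?_ hzb
      rintro p ⟨i, _, hi⟩; exact ⟨i, hi⟩
    have hdzf : Dense (Set.range (fun i : ℕ => (g ^ (i : ℤ)) z)) := by
      refine Dense.mono ?_ hzf
      rintro p ⟨i, hi⟩; exact ⟨i, hi⟩
    obtain ⟨i, hiK, hid⟩ := aux_exists_gt no_iso _ hdzb ((g ^ ((h : ℤ) + 1)) x) (hpos n hn) K₀
    obtain ⟨j, hjH, hjd⟩ := aux_exists_gt no_iso _ hdzf ((g ^ (-(k : ℤ))) y) (hpos n hn) (H₀ + 1)
    refine ⟨(i, j - 1), hiK, by omega, by rw [dist_comm]; exact hid, ?_⟩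
    have e : ((j - 1 : ℕ) : ℤ) + 1 = (j : ℤ) := by omega
    rw [e]; exact hjd
  -- recursive choice of the sequences
  set kh : ℕ → ℕ × ℕ := fun n => Nat.rec (0, 0)
    (fun n ih => (key ih.1 ih.2 (n + 1) (Nat.succ_le_succ (Nat.zero_le n))).choose) n
    with hkh
  have khspec : ∀ n : ℕ, (kh n).1 < (kh (n + 1)).1 ∧ (kh n).2 < (kh (n + 1)).2 ∧
      dist ((g ^ ((h : ℤ) + 1)) x) ((g ^ (-((kh (n + 1)).1 : ℤ))) z) < 1 / ((n + 1 : ℕ) : ℝ) ∧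
      dist ((g ^ (((kh (n + 1)).2 : ℤ) + 1)) z) ((g ^ (-(k : ℤ))) y) < 1 / ((n + 1 : ℕ) : ℝ) :=
    fun n => (key (kh n).1 (kh n).2 (n + 1) (Nat.succ_le_succ (Nat.zero_le n))).choose_spec
  set K : ℕ → ℕ := fun n => (kh n).1 with hKdef
  set H : ℕ → ℕ := fun n => (kh n).2 with hHdef
  set M : ℕ → ℕ := fun n => h + K n + H n + k + 2 with hMdef
  set C : ℕ → ℕ → X := fun n i =>
    if i ≤ h then (g ^ (i : ℤ)) x
    else if i ≤ h + 1 + K n + H n then (g ^ ((i : ℤ) - (h : ℤ) - 1 - (K n : ℤ))) z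
    else (g ^ ((i : ℤ) - (M n : ℤ))) y with hCdef
  have kmono : StrictMono K := strictMono_nat_of_lt_succ (fun n => (khspec n).1)
  have hmono : StrictMono H := strictMono_nat_of_lt_succ (fun n => (khspec n).2.1)
  have hdist : ∀ n : ℕ, 1 ≤ n →
      dist ((g ^ ((h : ℤ) + 1)) x) ((g ^ (-(K n : ℤ))) z) < 1 / (n : ℝ) ∧
      dist ((g ^ ((H n : ℤ) + 1)) z) ((g ^ (-(k : ℤ))) y) < 1 / (n : ℝ) := by
    intro n hn
    obtain ⟨p, rfl⟩ : ∃ p, n = p + 1 := ⟨n - 1, by omega⟩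
    exact ⟨(khspec p).2.2.1, (khspec p).2.2.2⟩
  -- value lemmas
  have Cval1 : ∀ n i, i ≤ h → C n i = (g ^ (i : ℤ)) x := by
    intro n i hi
    simp only [hCdef]
    rw [if_pos hi]
  have Cval2 : ∀ n i, h < i → i ≤ h + 1 + K n + H n →
      C n i = (g ^ ((i : ℤ) - (h : ℤ) - 1 - (K n : ℤ))) z := by
    intro n i h1 h2
    simp only [hCdef]
    rw [if_neg (by omega), if_pos h2]
  have Cval3 : ∀ n i, h + 1 + K n + H n < i → C n i = (g ^ ((i : ℤ) - (M n : ℤ))) y := by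
    intro n i h1
    simp only [hCdef]
    rw [if_neg (by omega), if_neg (by omega)]
  have hM : ∀ n, M n = h + K n + H n + k + 2 := fun n => rfl
  have fstep : ∀ (w : X) (a : ℤ), f ((g ^ a) w) = (g ^ (a + 1)) w := by
    intro w a
    rw [add_comm, zpow_add, zpow_one, Equiv.Perm.mul_apply]
    rfl
  -- injectivity of each chain
  have cases3 : ∀ (n i : ℕ), i ≤ M n →
      i ≤ h ∨ (h < i ∧ i ≤ h + 1 + K n + H n) ∨ h + 1 + K n + H n < i := by
    intro n i _; omega
  have hinj : ∀ n i j, i ≤ M n → j ≤ M n → C n i = C n j → i = j := by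
    intro n i j hi hj hij
    rcases cases3 n i hi with hi' | ⟨hi1, hi2⟩ | hi' <;>
      rcases cases3 n j hj with hj' | ⟨hj1, hj2⟩ | hj'
    · rw [Cval1 n i hi', Cval1 n j hj'] at hij
      have := apx _ _ hij; omega
    · rw [Cval1 n i hi', Cval2 n j hj1 hj2] at hij
      exact absurd hij.symm (dzx _ _)
    · rw [Cval1 n i hi', Cval3 n j hj'] at hij
      exact absurd hij (dxy _ _)
    · rw [Cval2 n i hi1 hi2, Cval1 n j hj'] at hij
      exact absurd hij (dzx _ _)
    · rw [Cval2 n i hi1 hi2, Cval2 n j hj1 hj2] at hij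
      have := apz _ _ hij; omega
    · rw [Cval2 n i hi1 hi2, Cval3 n j hj'] at hij
      exact absurd hij (dzy _ _)
    · rw [Cval3 n i hi', Cval1 n j hj'] at hij
      exact absurd hij.symm (dxy _ _)
    · rw [Cval3 n i hi', Cval2 n j hj1 hj2] at hij
      exact absurd hij.symm (dzy _ _)
    · rw [Cval3 n i hi', Cval3 n j hj'] at hij
      have := apy _ _ hij; omega
  refine ⟨K, H, C, M, kmono, hmono, hdist, fun n => rfl, fun n i => rfl, ?_, ?_, ?_, ?_⟩
  · -- IsEpsChain
    intro n hn
    obtain ⟨hd1, hd2⟩ := hdist n hn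
    have hMn := hM n
    refine ⟨by omega, ?_, ?_, ?_⟩
    · rw [Cval1 n 0 (Nat.zero_le h)]
      exact gz0 x
    · rw [Cval3 n (M n) (by omega), sub_self]
      exact gz0 y
    · intro i hi
      by_cases h1 : i < h
      · have e : f (C n i) = C n (i + 1) := by
          rw [Cval1 n i (by omega), Cval1 n (i + 1) (by omega), fstep,
            show ((i : ℤ) + 1) = ((i + 1 : ℕ) : ℤ) by omega]
        rw [e, dist_self]; exact hpos n hn
      · by_cases h2 : i = h
        · subst h2
          rw [Cval1 n i le_rfl, Cval2 n (i + 1) (by omega) (by omega), fstep,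
            show ((i + 1 : ℕ) : ℤ) - (i : ℤ) - 1 - (K n : ℤ) = -(K n : ℤ) by omega]
          exact hd1
        · by_cases h3 : i < h + 1 + K n + H n
          · have e : f (C n i) = C n (i + 1) := by
              rw [Cval2 n i (by omega) (by omega), Cval2 n (i + 1) (by omega) (by omega), fstep,
                show (i : ℤ) - (h : ℤ) - 1 - (K n : ℤ) + 1
                  = ((i + 1 : ℕ) : ℤ) - (h : ℤ) - 1 - (K n : ℤ) by omega]
            rw [e, dist_self]; exact hpos n hn
          · by_cases h4 : i = h + 1 + K n + H n
            · rw [Cval2 n i (by omega) (by omega), Cval3 n (i + 1) (by omega), fstep,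
                show (i : ℤ) - (h : ℤ) - 1 - (K n : ℤ) + 1 = (H n : ℤ) + 1 by omega,
                show ((i + 1 : ℕ) : ℤ) - (M n : ℤ) = -(k : ℤ) by omega]
              exact hd2
            · have e : f (C n i) = C n (i + 1) := by
                rw [Cval3 n i (by omega), Cval3 n (i + 1) (by omega), fstep,
                  show (i : ℤ) - (M n : ℤ) + 1 = ((i + 1 : ℕ) : ℤ) - (M n : ℤ) by omega]
              rw [e, dist_self]; exact hpos n hn
  · -- acyclicity
    intro n hcyc
    have hMn := hM n
    rcases hcyc with ⟨i, j, hi1, hi2, hj1, hj2, hne, hij⟩ | ⟨i, hi1, hi2, hor⟩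
    · exact hne (hinj n i j (by omega) (by omega) hij)
    · rcases hor with h0 | hm
      · have := hinj n i 0 (by omega) (by omega) h0; omega
      · have := hinj n i (M n) (by omega) le_rfl hm; omega
  · -- nested supports
    intro n p hp
    obtain ⟨i, hi, rfl⟩ := hp
    have hMn := hM n
    have hMn1 := hM (n + 1)
    have hK1 : K n < K (n + 1) := kmono (lt_add_one n)
    have hH1 : H n < H (n + 1) := hmono (lt_add_one n)
    obtain ⟨dK, hdK⟩ : ∃ d, K (n + 1) = K n + d := ⟨K (n + 1) - K n, by omega⟩
    obtain ⟨dH, hdH⟩ : ∃ d, H (n + 1) = H n + d := ⟨H (n + 1) - H n, by omega⟩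
    rcases cases3 n i hi with hi' | ⟨hi1, hi2⟩ | hi'
    · exact ⟨i, by omega, by rw [Cval1 (n + 1) i hi', Cval1 n i hi']⟩
    · refine ⟨i + dK, by omega, ?_⟩
      rw [Cval2 (n + 1) (i + dK) (by omega) (by omega), Cval2 n i hi1 hi2,
        show ((i + dK : ℕ) : ℤ) - (h : ℤ) - 1 - (K (n + 1) : ℤ)
          = (i : ℤ) - (h : ℤ) - 1 - (K n : ℤ) by omega]
    · refine ⟨i + dK + dH, by omega, ?_⟩
      rw [Cval3 (n + 1) (i + dK + dH) (by omega), Cval3 n i hi',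
        show ((i + dK + dH : ℕ) : ℤ) - (M (n + 1) : ℤ) = (i : ℤ) - (M n : ℤ) by omega]
  · -- the union of supports
    ext p
    simp only [Set.mem_diff, Set.mem_iUnion, Set.mem_union, Set.mem_insert_iff,
      Set.mem_singleton_iff, chainSupport, Set.mem_setOf_eq, orbitZ]
    constructor
    · rintro ⟨⟨n, i, hi, rfl⟩, hnot⟩
      push_neg at hnot
      obtain ⟨hpx, hpy⟩ := hnot
      have hMn := hM n
      rcases cases3 n i hi with hi' | ⟨hi1, hi2⟩ | hi'
      · have hi0 : i ≠ 0 := by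
          rintro rfl
          exact hpx (by rw [Cval1 n 0 (Nat.zero_le h)]; exact gz0 x)
        exact Or.inl (Or.inl ⟨i, by omega, hi', (Cval1 n i hi').symm⟩)
      · exact Or.inl (Or.inr ⟨(i : ℤ) - (h : ℤ) - 1 - (K n : ℤ), (Cval2 n i hi1 hi2).symm⟩)
      · have him : i ≠ M n := by
          rintro rfl
          exact hpy (by rw [Cval3 n _ hi', sub_self]; exact gz0 y)
        refine Or.inr ⟨M n - i, by omega, by omega, ?_⟩
        rw [Cval3 n i hi', show -(((M n - i : ℕ)) : ℤ) = (i : ℤ) - (M n : ℤ) by omega]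
    · rintro ((⟨i, hi1, hi2, rfl⟩ | ⟨c, rfl⟩) | ⟨j, hj1, hj2, rfl⟩)
      · have hM0 := hM 0
        refine ⟨⟨0, i, by omega, Cval1 0 i hi2⟩, ?_⟩
        rintro (hpx | hpy)
        · have : (g ^ (i : ℤ)) x = (g ^ (0 : ℤ)) x := by rw [hpx, gz0]
          have := apx _ _ this; omega
        · exact dxy (i : ℤ) 0 (by rw [hpy, gz0])
      · set n := c.natAbs with hn
        have hKc : n ≤ K n := kmono.le_apply
        have hHc : n ≤ H n := hmono.le_apply
        have hMn := hM n
        have hcabs : (c.natAbs : ℤ) = c ∨ (c.natAbs : ℤ) = -c := Int.natAbs_eq c |>.imp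
          (fun h' => h'.symm) (fun h' => by omega)
        refine ⟨⟨n, h + 1 + (c + (K n : ℤ)).toNat, by omega, ?_⟩, ?_⟩
        · rw [Cval2 n _ (by omega) (by omega),
            show ((h + 1 + (c + (K n : ℤ)).toNat : ℕ) : ℤ) - (h : ℤ) - 1 - (K n : ℤ) = c by omega]
        · rintro (hpx | hpy)
          · exact dzx c 0 (by rw [hpx, gz0])
          · exact dzy c 0 (by rw [hpy, gz0])
      · have hM0 := hM 0
        refine ⟨⟨0, M 0 - j, by omega, ?_⟩, ?_⟩
        · rw [Cval3 0 (M 0 - j) (by omega),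
            show ((M 0 - j : ℕ) : ℤ) - (M 0 : ℤ) = -(j : ℤ) by omega]
        · rintro (hpx | hpy)
          · exact dxy 0 (-(j : ℤ)) (by rw [gz0, hpx])
          · have : (g ^ (-(j : ℤ))) y = (g ^ (0 : ℤ)) y := by rw [hpy, gz0]
            have := apy _ _ this; omega
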